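/- Let k be a Lie algebra over a commutative ring R with k = [k, k] (k is perfect), and let A be a commutative (possibly non-unital) R-algebra with the property that for every a ∈ A there exists e ∈ A with ea = a. Then the Lie algebra k ⊗_R A, with bracket [x ⊗ a, y ⊗ b] = [x, y] ⊗ ab, is perfect. -/
import Mathlib


open TensorProduct

/-- If `k` is a perfect Lie algebra over a commutative ring `R` and `A` is a commutative
(possibly non-unital) `R`-algebra such that every `a ∈ A` admits `e` with `e * a = a`,
then the Lie algebra `k ⊗_R A` with bracket `[x ⊗ a, y ⊗ b] = [x,y] ⊗ ab` is perfect.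
The bracket is encoded by a bilinear map `B` characterized on pure tensors, and
perfectness of a Lie algebra is expressed as: every element lies in the linear span
of brackets. -/
theorem stmt3 {R k A : Type*} [CommRing R] [LieRing k] [LieAlgebra R k]
    [NonUnitalCommRing A] [Module R A] [SMulCommClass R A A] [IsScalarTower R A A]
    (hperf : ∀ x : k, x ∈ Submodule.span R {z : k | ∃ u v : k, z = ⁅u, v⁆})
    (hA : ∀ a : A, ∃ e : A, e * a = a)
    (B : TensorProduct R k A →ₗ[R] TensorProduct R k A →ₗ[R] TensorProduct R k A)
    (hB : ∀ (x y : k) (a b : A), B (x ⊗ₜ[R] a) (y ⊗ₜ[R] b) = ⁅x, y⁆ ⊗ₜ[R] (a * b)) :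
    ∀ z : TensorProduct R k A,
      z ∈ Submodule.span R {w : TensorProduct R k A | ∃ u v, w = B u v} := by
  intro z
  induction z using TensorProduct.induction_on with
  | zero => exact Submodule.zero_mem _
  | add p q hp hq => exact Submodule.add_mem _ hp hq
  | tmul x a =>
    obtain ⟨e, he⟩ := hA a
    refine Submodule.span_induction (p := fun x _ => x ⊗ₜ[R] a ∈ Submodule.span R
        {w : TensorProduct R k A | ∃ u v, w = B u v}) ?_ ?_ ?_ ?_ (hperf x)
    · rintro z ⟨u, v, rfl⟩
      apply Submodule.subset_span
      exact ⟨u ⊗ₜ[R] e, v ⊗ₜ[R] a, by rw [hB, he]⟩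
    · simp only [zero_tmul]; exact Submodule.zero_mem _
    · intro y y' _ _ hy hy'
      rw [add_tmul]; exact Submodule.add_mem _ hy hy'
    · intro r y _ hy
      rw [← TensorProduct.smul_tmul']; exact Submodule.smul_mem _ r hy
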